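/- arXiv:2203.12855 — 5 statements merged into one kernel-verified Lean document; each statement's English description precedes it below -/
import Mathlib

section
/- Let e : ℝ → ℝ^p be differentiable, satisfying e'(t) = -M(t) e(t) - d'(t), where vᵀ M(t) v ≥ α ‖v‖² for all v and t, and ‖d'(t)‖ ≤ ω. If V(t) = ½‖e(t)‖², then V'(t) ≤ -(2α - ν) V(t) + ω²/(2ν) for any ν > 0. -/
open scoped RealInnerProductSpace

theorem dob_lyapunov_inequality (p : ℕ) (e d : ℝ → EuclideanSpace ℝ (Fin p))
    (M : ℝ → EuclideanSpace ℝ (Fin p) →ₗ[ℝ] EuclideanSpace ℝ (Fin p))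
    (d' : ℝ → EuclideanSpace ℝ (Fin p)) (α ω ν : ℝ)
    (hν : 0 < ν) (hω : 0 ≤ ω)
    (hM : ∀ t, ∀ v : EuclideanSpace ℝ (Fin p), α * ‖v‖ ^ 2 ≤ ⟪v, M t v⟫)
    (hd : ∀ t, HasDerivAt d (d' t) t)
    (hdbnd : ∀ t, ‖d' t‖ ≤ ω)
    (he : ∀ t, HasDerivAt e (-(M t (e t)) - d' t) t) :
    ∀ t, deriv (fun s => ‖e s‖ ^ 2 / 2) t ≤
      -(2 * α - ν) * (‖e t‖ ^ 2 / 2) + ω ^ 2 / (2 * ν) := by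
  intro t
  set w := -(M t (e t)) - d' t with hw
  have hD : HasDerivAt (fun s => ‖e s‖ ^ 2 / 2) ⟪e t, w⟫ t := by
    have h1 : HasDerivAt (fun s => ⟪e s, e s⟫ / 2) ((⟪e t, w⟫ + ⟪w, e t⟫) / 2) t :=
      ((he t).inner ℝ (he t)).div_const 2
    have h2 : (⟪e t, w⟫ + ⟪w, e t⟫) / 2 = ⟪e t, w⟫ := by
      rw [real_inner_comm w (e t)]; ring
    rw [h2] at h1
    convert h1 using 2 with s
    rw [real_inner_self_eq_norm_sq]
  rw [hD.deriv]
  have h3 : ⟪e t, w⟫ = -⟪e t, M t (e t)⟫ - ⟪e t, d' t⟫ := by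
    rw [hw, inner_sub_right, inner_neg_right]
  have h4 := hM t (e t)
  have h5 : -⟪e t, d' t⟫ ≤ ‖e t‖ * ω := by
    calc -⟪e t, d' t⟫ ≤ ‖e t‖ * ‖d' t‖ := by
          have := abs_real_inner_le_norm (e t) (d' t)
          linarith [neg_abs_le ⟪e t, d' t⟫]
      _ ≤ ‖e t‖ * ω := by
          exact mul_le_mul_of_nonneg_left (hdbnd t) (norm_nonneg _)
  have h6 : ‖e t‖ * ω ≤ ν / 2 * ‖e t‖ ^ 2 + ω ^ 2 / (2 * ν) := by
    have h := div_nonneg (sq_nonneg (ν * ‖e t‖ - ω)) (by linarith : (0:ℝ) ≤ 2 * ν)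
    have heq : (ν * ‖e t‖ - ω) ^ 2 / (2 * ν)
        = ν / 2 * ‖e t‖ ^ 2 - ‖e t‖ * ω + ω ^ 2 / (2 * ν) := by
      field_simp; ring
    rw [heq] at h
    linarith
  rw [h3]
  nlinarith [h4, h5, h6]
end

section
/- Let h : ℝ → ℝ and e : ℝ → ℝ^p be differentiable, β > 0, and define h̄(t) = β h(t) - ½‖e(t)‖². Suppose h̄(0) > 0 and h̄'(t) ≥ -γ h̄(t) for all t ≥ 0 with γ > 0. Then h(t) ≥ ‖e(t)‖²/(2β) ≥ 0 for all t ≥ 0. -/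
theorem composite_barrier_safety (p : ℕ) (h : ℝ → ℝ) (e : ℝ → EuclideanSpace ℝ (Fin p))
    (β γ : ℝ) (hβ : 0 < β) (hγ : 0 < γ)
    (hh : Differentiable ℝ h) (he : Differentiable ℝ e)
    (hbar : ℝ → ℝ) (hbar_def : ∀ t, hbar t = β * h t - ‖e t‖ ^ 2 / 2)
    (h0 : 0 < hbar 0)
    (hineq : ∀ t ≥ 0, deriv hbar t ≥ -γ * hbar t) :
    ∀ t ≥ 0, h t ≥ ‖e t‖ ^ 2 / (2 * β) ∧ (0:ℝ) ≤ ‖e t‖ ^ 2 / (2 * β) := by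
  have hbar_eq : hbar = fun t => β * h t - ‖e t‖ ^ 2 / 2 := funext hbar_def
  have hnsq : Differentiable ℝ (fun t => ‖e t‖ ^ 2) := by
    have h1 : Differentiable ℝ (fun t => inner ℝ (e t) (e t) : ℝ → ℝ) := he.inner ℝ he
    have h2 : (fun t => ‖e t‖ ^ 2) = (fun t => inner ℝ (e t) (e t) : ℝ → ℝ) :=
      funext fun t => (real_inner_self_eq_norm_sq _).symm
    rw [h2]; exact h1
  have hdbar : Differentiable ℝ hbar := by
    rw [hbar_eq]
    exact ((hh.const_mul β).sub (hnsq.div_const 2))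
  set g : ℝ → ℝ := fun t => hbar t * Real.exp (γ * t) with hg
  have hdg : Differentiable ℝ g :=
    hdbar.mul ((differentiable_const γ).mul differentiable_id).exp
  have hderiv : ∀ t, deriv g t = (deriv hbar t + γ * hbar t) * Real.exp (γ * t) := by
    intro t
    have : deriv g t = deriv hbar t * Real.exp (γ * t) +
        hbar t * (Real.exp (γ * t) * γ) := by
      have h1 : HasDerivAt (fun t => Real.exp (γ * t)) (Real.exp (γ * t) * γ) t := by
        simpa [Function.comp_def] using (Real.hasDerivAt_exp (γ * t)).comp t
          ((hasDerivAt_id t).const_mul γ)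
      exact ((hdbar t).hasDerivAt.mul h1).deriv
    rw [this]; ring
  have hmono : MonotoneOn g (Set.Ici 0) := by
    apply monotoneOn_of_deriv_nonneg (convex_Ici 0) hdg.continuous.continuousOn
      (hdg.differentiableOn.mono interior_subset)
    intro t ht
    rw [interior_Ici] at ht
    rw [hderiv t]
    have := hineq t (le_of_lt ht)
    have : 0 ≤ deriv hbar t + γ * hbar t := by linarith
    positivity
  intro t ht
  have hgt : g 0 ≤ g t := hmono (Set.self_mem_Ici) ht ht
  have hg0 : 0 < g 0 := by simp [hg, h0]
  have hbarpos : 0 < hbar t := by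
    have hpos : 0 < hbar t * Real.exp (γ * t) := lt_of_lt_of_le hg0 hgt
    have hexp : 0 < Real.exp (γ * t) := Real.exp_pos _
    nlinarith
  rw [hbar_def t] at hbarpos
  constructor
  · rw [ge_iff_le, div_le_iff₀ (by positivity)]
    nlinarith
  · positivity
end

section
/- Under the hypotheses of the previous lemma with h̄(t) = β h(t) - ½‖e(t)‖², h̄(0) ≥ 0, and h̄'(t) ≥ -γ h̄(t) - ω²/(2ν), one has h(t) ≥ -(ω²)/(2νγβ)(1 - e^{-γt}) ≥ -(ω²)/(2νγβ) for all t ≥ 0. -/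
theorem safety_violation_bound (p : ℕ) (h : ℝ → ℝ) (e : ℝ → EuclideanSpace ℝ (Fin p))
    (β γ ν ω : ℝ) (hβ : 0 < β) (hγ : 0 < γ) (hν : 0 < ν) (hω : 0 ≤ ω)
    (hbar : ℝ → ℝ) (hbar_def : ∀ t, hbar t = β * h t - ‖e t‖ ^ 2 / 2)
    (hdiff : Differentiable ℝ hbar)
    (h0 : 0 ≤ hbar 0)
    (hineq : ∀ t ≥ 0, deriv hbar t ≥ -γ * hbar t - ω ^ 2 / (2 * ν)) :
    ∀ t ≥ 0, h t ≥ -(ω ^ 2) / (2 * ν * γ * β) * (1 - Real.exp (-γ * t)) ∧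
      -(ω ^ 2) / (2 * ν * γ * β) * (1 - Real.exp (-γ * t)) ≥ -(ω ^ 2) / (2 * ν * γ * β) := by
  set C : ℝ := ω ^ 2 / (2 * ν * γ) with hC
  have hCnn : 0 ≤ C := by positivity
  set g : ℝ → ℝ := fun t => hbar t * Real.exp (γ * t) + C * (Real.exp (γ * t) - 1) with hg
  have hgd : Differentiable ℝ g := by
    fun_prop
  have hderiv : ∀ t, deriv g t =
      deriv hbar t * Real.exp (γ * t) + hbar t * (γ * Real.exp (γ * t))
        + C * (γ * Real.exp (γ * t)) := by
    intro t
    have hexp : HasDerivAt (fun t : ℝ => Real.exp (γ * t)) (γ * Real.exp (γ * t)) t := by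
      have := (Real.hasDerivAt_exp (γ * t)).comp t ((hasDerivAt_id t).const_mul γ)
      simpa [mul_comm, Function.comp_def] using this
    have h1 : HasDerivAt g (deriv hbar t * Real.exp (γ * t) + hbar t * (γ * Real.exp (γ * t))
        + C * (γ * Real.exp (γ * t))) t := by
      exact ((hdiff t).hasDerivAt.mul hexp).add ((hexp.sub_const 1).const_mul C)
    exact h1.deriv
  have hmono : MonotoneOn g (Set.Ici (0 : ℝ)) := by
    apply monotoneOn_of_deriv_nonneg (convex_Ici 0) hgd.continuous.continuousOn
      (fun t ht => (hgd t).differentiableWithinAt)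
    intro t ht
    rw [interior_Ici] at ht
    have ht0 : (0 : ℝ) ≤ t := le_of_lt ht
    have h1 := hineq t ht0
    have hexp_pos : 0 < Real.exp (γ * t) := Real.exp_pos _
    rw [hderiv t]
    have hCγ : C * γ = ω ^ 2 / (2 * ν) := by
      field_simp [hC]
      rw [hC]; field_simp
    nlinarith [mul_le_mul_of_nonneg_right h1 hexp_pos.le]
  intro t ht
  have hgt : 0 ≤ g t := by
    have := hmono (Set.self_mem_Ici) (Set.mem_Ici.mpr ht) ht
    have hg0 : g 0 = hbar 0 := by simp [hg]
    linarith [this, h0]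
  have hexp_pos : 0 < Real.exp (γ * t) := Real.exp_pos _
  have hbar_lb : hbar t ≥ -C * (1 - Real.exp (-γ * t)) := by
    have hinv : Real.exp (-γ * t) = (Real.exp (γ * t))⁻¹ := by
      rw [← Real.exp_neg]; ring_nf
    have : hbar t * Real.exp (γ * t) ≥ -C * (Real.exp (γ * t) - 1) := by
      simp only [hg] at hgt; linarith
    rw [ge_iff_le, hinv]
    rw [← mul_le_mul_iff_of_pos_right hexp_pos]
    calc -C * (1 - (Real.exp (γ * t))⁻¹) * Real.exp (γ * t)
        = -C * (Real.exp (γ * t) - 1) := by field_simp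
      _ ≤ hbar t * Real.exp (γ * t) := this
  have hbeta : β * h t ≥ hbar t := by
    have := hbar_def t
    nlinarith [sq_nonneg ‖e t‖]
  constructor
  · have key : β * h t ≥ -C * (1 - Real.exp (-γ * t)) := le_trans hbar_lb hbeta
    have hcoef : -(ω ^ 2) / (2 * ν * γ * β) = (-C) / β := by
      field_simp [hC]
      rw [hC]; field_simp
    rw [hcoef, ge_iff_le, div_mul_eq_mul_div, div_le_iff₀ hβ]
    linarith [key]
  · have h1 : Real.exp (-γ * t) ≤ 1 := by
      apply Real.exp_le_one_iff.mpr
      nlinarith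
    have hc : -(ω ^ 2) / (2 * ν * γ * β) ≤ 0 := by
      exact div_nonpos_of_nonpos_of_nonneg (neg_nonpos.mpr (by positivity)) (by positivity)
    nlinarith [Real.exp_pos (-γ * t)]
end

section
/- Let s₀, s₁, …, s_{r-1} : ℝ → ℝ be differentiable functions satisfying s_k(t) = s_{k-1}'(t) + λ_k s_{k-1}(t) for k = 1,…,r-1 with λ_k > 0, and suppose s_k(0) > 0 for all k = 0,…,r-1, and s_{r-1}(t) > 0 for all t ≥ 0. Then s_k(t) > 0 for all t ≥ 0 and all k = 0,…,r-1; in particular s₀(t) = h(t) > 0. -/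
lemma pos_of_ode (s : ℝ → ℝ) (L : ℝ) (hL : 0 < L) (hd : Differentiable ℝ s)
    (h : ∀ t ≥ (0:ℝ), 0 < deriv s t + L * s t) (h0 : 0 < s 0) :
    ∀ t ≥ (0:ℝ), 0 < s t := by
  set g : ℝ → ℝ := fun t => s t * Real.exp (L * t) with hg
  have hgd : ∀ t, HasDerivAt g ((deriv s t + L * s t) * Real.exp (L * t)) t := by
    intro t
    have h1 : HasDerivAt s (deriv s t) t := (hd t).hasDerivAt
    have h2 : HasDerivAt (fun t => Real.exp (L * t)) (L * Real.exp (L * t)) t := by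
      have := (Real.hasDerivAt_exp (L * t)).comp t ((hasDerivAt_id t).const_mul L)
      simpa [mul_comm, Function.comp_def] using this
    have : HasDerivAt (fun y => s y * Real.exp (L * y)) (deriv s t * Real.exp (L * t) + s t * (L * Real.exp (L * t))) t := h1.mul h2
    convert this using 1
    ring
  have hmono : StrictMonoOn g (Set.Ici 0) := by
    apply strictMonoOn_of_deriv_pos (convex_Ici 0)
    · exact Continuous.continuousOn (by
        exact (hd.continuous.mul (Real.continuous_exp.comp (continuous_const.mul continuous_id))))
    · intro t ht
      rw [(hgd t).deriv]
      have ht' : (0:ℝ) ≤ t := le_of_lt (by simpa using ht)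
      exact mul_pos (h t ht') (Real.exp_pos _)
  intro t ht
  rcases eq_or_lt_of_le ht with h' | h'
  · rwa [← h']
  · have := hmono (Set.self_mem_Ici) (Set.mem_Ici.2 ht) h'
    have hgt : 0 < g t := lt_trans (by simpa [hg] using mul_pos h0 (Real.exp_pos (L*0))) this
    have := Real.exp_pos (L * t)
    simp only [hg] at hgt
    nlinarith [hgt, Real.exp_pos (L * t)]

theorem cascade_positivity (r : ℕ) (hr : 1 ≤ r) (s : ℕ → ℝ → ℝ) (lam : ℕ → ℝ)
    (hdiff : ∀ k ≤ r - 1, Differentiable ℝ (s k))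
    (hlam : ∀ k, 1 ≤ k → k ≤ r - 1 → 0 < lam k)
    (hrel : ∀ k, 1 ≤ k → k ≤ r - 1 → ∀ t, s k t = deriv (s (k - 1)) t + lam k * s (k - 1) t)
    (hinit : ∀ k ≤ r - 1, 0 < s k 0)
    (htop : ∀ t ≥ (0:ℝ), 0 < s (r - 1) t) :
    ∀ k ≤ r - 1, ∀ t ≥ (0:ℝ), 0 < s k t := by
  set m := r - 1 with hm
  have key : ∀ d k, k + d = m → ∀ t ≥ (0:ℝ), 0 < s k t := by
    intro d
    induction d with
    | zero =>
      intro k hk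
      have hkm : k = m := by omega
      rw [hkm]; exact htop
    | succ d ih =>
      intro k hk t ht
      have hk1 : (k + 1) + d = m := by omega
      have hnext : ∀ t ≥ (0:ℝ), 0 < s (k + 1) t := ih (k + 1) hk1
      have h1 : 1 ≤ k + 1 := by omega
      have h2 : k + 1 ≤ m := by omega
      have heq := hrel (k + 1) h1 h2
      simp only [Nat.add_sub_cancel] at heq
      refine pos_of_ode (s k) (lam (k+1)) (hlam (k+1) h1 h2) (hdiff k (by omega)) ?_
        (hinit k (by omega)) t ht
      intro u hu
      rw [← heq u]
      exact hnext u hu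
  intro k hk
  exact key (m - k) k (by omega)
end

section
/- Let M be a symmetric positive definite real n×n matrix with μ₁ I ≼ M⁻¹ ≼ μ₂ I (μ₁ > 0), and let e : ℝ → ℝ^n satisfy e'(t) = -α₁ M⁻¹ e(t) - d'(t) with ‖d'(t)‖ ≤ ω_d and α₁ > 0. Then V₁(t) = ½‖e(t)‖² satisfies V₁'(t) ≤ -(2α - ν) V₁(t) + ω_d²/(2ν) for any ν > 0, where α = α₁ μ₁. -/
open Matrix

theorem el_dob_lyapunov (n : ℕ) (M : Matrix (Fin n) (Fin n) ℝ)
    (hMsymm : Mᵀ = M) (hMpd : M.PosDef)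
    (μ₁ μ₂ : ℝ) (hμ₁ : 0 < μ₁)
    (hlow : ∀ v : Fin n → ℝ, μ₁ * (v ⬝ᵥ v) ≤ v ⬝ᵥ M⁻¹.mulVec v)
    (hhigh : ∀ v : Fin n → ℝ, v ⬝ᵥ M⁻¹.mulVec v ≤ μ₂ * (v ⬝ᵥ v))
    (e d' : ℝ → Fin n → ℝ) (α₁ ω_d ν : ℝ) (hα₁ : 0 < α₁) (hν : 0 < ν) (hω : 0 ≤ ω_d)
    (hdbnd : ∀ t, ‖(WithLp.equiv 2 (Fin n → ℝ)).symm (d' t)‖ ≤ ω_d)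
    (he : ∀ t, HasDerivAt e (-α₁ • M⁻¹.mulVec (e t) - d' t) t) :
    ∀ t, deriv (fun s => (e s ⬝ᵥ e s) / 2) t ≤
      -(2 * (α₁ * μ₁) - ν) * ((e t ⬝ᵥ e t) / 2) + ω_d ^ 2 / (2 * ν) := by
  intro t
  set v : Fin n → ℝ := -α₁ • M⁻¹.mulVec (e t) - d' t with hv
  have hcomp : ∀ i, HasDerivAt (fun s => e s i) (v i) t := fun i =>
    (ContinuousLinearMap.proj (R := ℝ) (φ := fun _ : Fin n => ℝ) i).hasFDerivAt.comp_hasDerivAt t (he t)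
  have hdot : HasDerivAt (fun s => e s ⬝ᵥ e s) (∑ i, (v i * e t i + e t i * v i)) t := by
    simp only [dotProduct]
    exact HasDerivAt.fun_sum fun i _ => (hcomp i).mul (hcomp i)
  have hderiv : deriv (fun s => (e s ⬝ᵥ e s) / 2) t
      = (∑ i, (v i * e t i + e t i * v i)) / 2 := (hdot.div_const 2).deriv
  rw [hderiv]
  have hsum : (∑ i, (v i * e t i + e t i * v i)) / 2 = e t ⬝ᵥ v := by
    simp [dotProduct, Finset.sum_add_distrib, mul_comm]
  rw [hsum]
  have hsplit : e t ⬝ᵥ v = -α₁ * (e t ⬝ᵥ M⁻¹.mulVec (e t)) - e t ⬝ᵥ d' t := by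
    rw [hv, dotProduct_sub, dotProduct_smul]
    simp
  -- Cauchy-Schwarz via EuclideanSpace
  set E : EuclideanSpace ℝ (Fin n) := (WithLp.equiv 2 (Fin n → ℝ)).symm (e t)
  set D : EuclideanSpace ℝ (Fin n) := (WithLp.equiv 2 (Fin n → ℝ)).symm (d' t)
  have hinner : e t ⬝ᵥ d' t = inner ℝ E D := by
    simp [E, D, PiLp.inner_apply, dotProduct, RCLike.inner_apply, mul_comm]
  have hEnorm : e t ⬝ᵥ e t = ‖E‖ ^ 2 := by
    rw [← real_inner_self_eq_norm_sq]
    simp [E, PiLp.inner_apply, dotProduct, RCLike.inner_apply, -real_inner_self_eq_norm_sq]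
    rw [EuclideanSpace.norm_eq, Real.sq_sqrt (by positivity)]
    simp [Real.norm_eq_abs, sq_abs, sq]
  have hcs : |inner ℝ E D| ≤ ‖E‖ * ‖D‖ := abs_real_inner_le_norm E D
  have hD : ‖D‖ ≤ ω_d := hdbnd t
  have hDn : (0:ℝ) ≤ ‖D‖ := norm_nonneg _
  have hEn : (0:ℝ) ≤ ‖E‖ := norm_nonneg _
  have hbound : |e t ⬝ᵥ d' t| ≤ ω_d * ‖E‖ := by
    rw [hinner]
    calc |inner ℝ E D| ≤ ‖E‖ * ‖D‖ := hcs
      _ ≤ ‖E‖ * ω_d := by nlinarith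
      _ = ω_d * ‖E‖ := mul_comm _ _
  have hM := hlow (e t)
  have habs := abs_le.mp hbound
  have key : ω_d * ‖E‖ ≤ ν * ‖E‖ ^ 2 / 2 + ω_d ^ 2 / (2 * ν) := by
    rw [← sub_nonneg]
    have heq : ν * ‖E‖ ^ 2 / 2 + ω_d ^ 2 / (2 * ν) - ω_d * ‖E‖
        = (ν * ‖E‖ - ω_d) ^ 2 / (2 * ν) := by
      field_simp
      ring
    rw [heq]
    positivity
  rw [hsplit, hEnorm]
  rw [hEnorm] at hM
  nlinarith [mul_le_mul_of_nonneg_left hM hα₁.le, habs.1, key]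
end
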